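/- For every m ∈ ℕ and every j ∈ {1,…,d}, the limit of F(k) as k approaches mπ/a_j from the left is +∞, where F(k) = 2k Σ_{j=1}^d tan((π/2)(k a_j/π - ⌊k a_j/π⌋)). -/

import Mathlib

open Real

theorem stmt_3 (d : ℕ) (hd : 1 ≤ d) (a : Fin d → ℝ) (ha : ∀ j, 0 < a j)
    (F : ℝ → ℝ)
    (hF : ∀ k, F k = 2 * k * ∑ j : Fin d,
      Real.tan (π / 2 * (k * a j / π - (⌊k * a j / π⌋ : ℝ))))
    (m : ℕ) (hm : 0 < m) (j : Fin d) :
    Filter.Tendsto F (nhdsWithin ((m : ℝ) * π / a j) (Set.Iio ((m : ℝ) * π / a j)))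
      Filter.atTop := by
  have hπ := Real.pi_pos
  have haj := ha j
  set c : ℝ := (m : ℝ) * π / a j with hc
  have hm1 : (1 : ℝ) ≤ (m : ℝ) := by exact_mod_cast hm
  have hc0 : 0 < c := by
    apply div_pos _ haj
    positivity
  have hca : c * a j = (m : ℝ) * π := by
    rw [hc, div_mul_cancel₀ _ haj.ne']
  -- the map g
  set g : ℝ → ℝ := fun k => π / 2 * (k * a j / π - ((m : ℝ) - 1)) with hgdef
  have hgc : g c = π / 2 := by
    simp only [hgdef]
    rw [hca]
    field_simp
    ring
  have hg : Filter.Tendsto g (nhdsWithin c (Set.Iio c)) (nhdsWithin (π/2) (Set.Iio (π/2))) := by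
    rw [tendsto_nhdsWithin_iff]
    constructor
    · have hcg : Continuous g := by fun_prop
      have h2 : Filter.Tendsto g (nhds c) (nhds (g c)) := hcg.tendsto c
      rw [hgc] at h2
      exact h2.mono_left nhdsWithin_le_nhds
    · filter_upwards [self_mem_nhdsWithin] with k hk
      simp only [Set.mem_Iio] at hk ⊢
      have h1 : k * a j / π < (m : ℝ) := by
        rw [div_lt_iff₀ hπ]
        calc k * a j < c * a j := by nlinarith
        _ = (m:ℝ) * π := hca
      simp only [hgdef]
      nlinarith
  have htan : Filter.Tendsto (fun k => Real.tan (g k)) (nhdsWithin c (Set.Iio c))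
      Filter.atTop := Real.tendsto_tan_pi_div_two.comp hg
  have hmain : Filter.Tendsto (fun k => c * Real.tan (g k)) (nhdsWithin c (Set.Iio c))
      Filter.atTop := htan.const_mul_atTop hc0
  apply Filter.tendsto_atTop_mono' _ _ hmain
  have hev1 : ∀ᶠ k in nhdsWithin c (Set.Iio c), c / 2 < k := by
    apply eventually_nhdsWithin_of_eventually_nhds
    exact eventually_gt_nhds (by linarith)
  have hev2 : ∀ᶠ k in nhdsWithin c (Set.Iio c), c - π / a j < k := by
    apply eventually_nhdsWithin_of_eventually_nhds
    apply eventually_gt_nhds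
    have : 0 < π / a j := div_pos hπ haj
    linarith
  have hev3 := htan.eventually_ge_atTop 0
  filter_upwards [hev1, hev2, hev3, self_mem_nhdsWithin] with k hk1 hk2 hk3 hk4
  simp only [Set.mem_Iio] at hk4
  have hk0 : 0 < k := by linarith
  -- floor of k * a j / π is m - 1
  have hfl : ⌊k * a j / π⌋ = (m : ℤ) - 1 := by
    apply Int.floor_eq_iff.2
    constructor
    · push_cast
      rw [le_div_iff₀ hπ]
      have : (c - π / a j) * a j ≤ k * a j := by nlinarith
      rw [sub_mul, hca] at this
      rw [div_mul_cancel₀ _ haj.ne'] at this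
      linarith
    · push_cast
      rw [div_lt_iff₀ hπ]
      calc k * a j < c * a j := by nlinarith
      _ = (m:ℝ) * π := hca
      _ = ((m:ℝ) - 1 + 1) * π := by ring
  have hterm : Real.tan (π / 2 * (k * a j / π - (⌊k * a j / π⌋ : ℝ))) = Real.tan (g k) := by
    rw [hfl]; push_cast; rfl
  rw [hF k]
  have hsum : Real.tan (g k) ≤ ∑ i : Fin d,
      Real.tan (π / 2 * (k * a i / π - (⌊k * a i / π⌋ : ℝ))) := by
    rw [← hterm]
    apply Finset.single_le_sum (f := fun i =>
      Real.tan (π / 2 * (k * a i / π - (⌊k * a i / π⌋ : ℝ)))) _ (Finset.mem_univ j)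
    intro i _
    apply Real.tan_nonneg_of_nonneg_of_le_pi_div_two
    · have := Int.fract_nonneg (k * a i / π)
      rw [Int.fract] at this
      positivity
    · have := (Int.fract_lt_one (k * a i / π)).le
      rw [Int.fract] at this
      nlinarith
  calc c * Real.tan (g k) ≤ 2 * k * Real.tan (g k) := by nlinarith
  _ ≤ 2 * k * ∑ i : Fin d, Real.tan (π / 2 * (k * a i / π - (⌊k * a i / π⌋ : ℝ))) := by
      apply mul_le_mul_of_nonneg_left hsum; linarith
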